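/- For every n ≥ 1, the cardinality of the disjoint union T_n ⊔ T_n^= ⊔ (T_n^0 ∩ T_n^=) equals d(n) = (2^n + 1)·(2n−1)!! − (2^{n−1} + 1)·n!. (This is the basis count for the Brauer diagram algebra BrD(D_n) in the proof of Proposition 4.6, combining Lemma 4.3 with the definition of d(n).) -/

import Mathlib

/-- A decorated `n`-connector: a fixed-point-free involution `conn` of the `2n`-point
set (top points `Sum.inl i`, bottom points `Sum.inr i`) — i.e. an `n`-connector —
together with a decoration `dec` of its blocks (a Boolean function constant on the
blocks `{x, conn x}`), such that the number of decorated blocks is even.  Since every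
block has exactly two points, the number of decorated blocks is even if and only if
the number of decorated points is divisible by `4`.  The type `DecConnector n`
realises the set `T_n`. -/
structure DecConnector (n : ℕ) where
  conn : Equiv.Perm (Fin n ⊕ Fin n)
  invol : ∀ x, conn (conn x) = x
  fpf : ∀ x, conn x ≠ x
  dec : Fin n ⊕ Fin n → Bool
  dec_block : ∀ x, dec (conn x) = dec x
  even_blocks : 4 ∣ (Finset.univ.filter fun x => dec x = true).card

open Finset Equiv

def IsPM {α : Type*} (σ : Equiv.Perm α) : Prop := (∀ x, σ (σ x) = x) ∧ ∀ x, σ x ≠ x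

instance {α : Type*} [DecidableEq α] [Fintype α] (σ : Equiv.Perm α) : Decidable (IsPM σ) := by
  unfold IsPM; infer_instance

def pmCount (α : Type*) [DecidableEq α] [Fintype α] : ℕ :=
  (Finset.univ.filter fun σ : Equiv.Perm α => IsPM σ).card

section ext
variable {α : Type*} [DecidableEq α] {a p : α} {τ : Equiv.Perm {x : α // x ≠ a ∧ x ≠ p}}

def extFun (a p : α) (τ : Equiv.Perm {x : α // x ≠ a ∧ x ≠ p}) : α → α :=
  fun x => if h1 : x = a then p else if h2 : x = p then a else ↑(τ ⟨x, h1, h2⟩)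

lemma extFun_a : extFun a p τ a = p := by simp [extFun]

lemma extFun_p (hp : p ≠ a) : extFun a p τ p = a := by simp [extFun, hp]

lemma extFun_other {x : α} (h1 : x ≠ a) (h2 : x ≠ p) :
    extFun a p τ x = ↑(τ ⟨x, h1, h2⟩) := by simp [extFun, h1, h2]

lemma extFun_invol (hp : p ≠ a) (hτ : ∀ x, τ (τ x) = x) :
    Function.Involutive (extFun a p τ) := by
  intro x
  by_cases h1 : x = a
  · subst h1; rw [extFun_a, extFun_p hp]
  by_cases h2 : x = p
  · subst h2; rw [extFun_p hp, extFun_a]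
  rw [extFun_other h1 h2, extFun_other (τ ⟨x, h1, h2⟩).2.1 (τ ⟨x, h1, h2⟩).2.2]
  rw [show (⟨↑(τ ⟨x, h1, h2⟩), (τ ⟨x, h1, h2⟩).2.1, (τ ⟨x, h1, h2⟩).2.2⟩ :
      {x : α // x ≠ a ∧ x ≠ p}) = τ ⟨x, h1, h2⟩ from rfl, hτ]

end ext

theorem fiber_card {α : Type*} [DecidableEq α] [Fintype α] (a p : α) (hp : p ≠ a) :
    ((Finset.univ.filter fun σ : Equiv.Perm α => IsPM σ).filter fun σ => σ a = p).card
      = pmCount {x : α // x ≠ a ∧ x ≠ p} := by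
  have key : ∀ σ : Equiv.Perm α, IsPM σ → σ a = p →
      ∀ x, (x ≠ a ∧ x ≠ p) ↔ (σ x ≠ a ∧ σ x ≠ p) := by
    intro σ hσ hap x
    obtain ⟨h1, -⟩ := hσ
    have e1 : σ x = a ↔ x = p := by
      constructor
      · intro h; have := congrArg σ h; rwa [h1, hap] at this
      · rintro rfl; rw [← hap, h1]
    have e2 : σ x = p ↔ x = a := by
      constructor
      · intro h; rw [← hap] at h; exact σ.injective h
      · rintro rfl; exact hap
    constructor
    · rintro ⟨u, v⟩; exact ⟨fun h => v (e1.mp h), fun h => u (e2.mp h)⟩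
    · rintro ⟨u, v⟩; exact ⟨fun h => v (e2.mpr h), fun h => u (e1.mpr h)⟩
  unfold pmCount
  refine Finset.card_bij'
    (fun σ hσ => σ.subtypePerm
      (fun x => (key σ (mem_filter.mp (mem_filter.mp hσ).1).2 (mem_filter.mp hσ).2 x).symm))
    (fun τ hτ => Function.Involutive.toPerm (extFun a p τ)
      (extFun_invol hp (fun x => (mem_filter.mp hτ).2.1 x)))
    ?_ ?_ ?_ ?_
  · intro σ hσ
    simp only [mem_filter, mem_univ, true_and] at hσ ⊢
    obtain ⟨⟨h1, h2⟩, hap⟩ := hσ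
    exact ⟨fun x => Subtype.ext (h1 x), fun x hx => h2 x (congrArg Subtype.val hx)⟩
  · intro τ hτ
    simp only [mem_filter, mem_univ, true_and] at hτ ⊢
    obtain ⟨h1, h2⟩ := hτ
    refine ⟨⟨fun x => extFun_invol hp h1 x, ?_⟩, extFun_a⟩
    intro x hx
    replace hx : extFun a p τ x = x := hx
    by_cases ha : x = a
    · subst ha; rw [extFun_a] at hx; exact hp hx
    by_cases hpp : x = p
    · subst hpp; rw [extFun_p hp] at hx; exact hp hx.symm
    · rw [extFun_other ha hpp] at hx
      exact h2 ⟨x, ha, hpp⟩ (Subtype.ext hx)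
  · intro σ hσ
    have hm := mem_filter.mp hσ
    have hPM := (mem_filter.mp hm.1).2
    have hap := hm.2
    ext x
    show extFun a p _ x = σ x
    by_cases ha : x = a
    · subst ha; rw [extFun_a, hap]
    by_cases hpp : x = p
    · subst hpp; rw [extFun_p hp, ← hap, hPM.1]
    · rw [extFun_other ha hpp]; rfl
  · intro τ hτ
    ext x
    show extFun a p τ ↑x = ↑(τ x)
    rw [extFun_other x.2.1 x.2.2]

theorem pmCount_congr {α β : Type*} [DecidableEq α] [Fintype α] [DecidableEq β] [Fintype β]
    (e : α ≃ β) : pmCount α = pmCount β := by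
  unfold pmCount
  refine Finset.card_bij' (fun σ _ => e.permCongr σ) (fun τ _ => e.symm.permCongr τ) ?_ ?_ ?_ ?_
  · intro σ hσ
    simp only [mem_filter, mem_univ, true_and] at hσ ⊢
    obtain ⟨h1, h2⟩ := hσ
    constructor
    · intro x; simp [Equiv.permCongr_apply, h1]
    · intro x hx
      simp only [Equiv.permCongr_apply] at hx
      exact h2 (e.symm x) (by simpa using congrArg e.symm hx)
  · intro τ hτ
    simp only [mem_filter, mem_univ, true_and] at hτ ⊢
    obtain ⟨h1, h2⟩ := hτ
    constructor
    · intro x; simp [Equiv.permCongr_apply, h1]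
    · intro x hx
      simp only [Equiv.permCongr_apply] at hx
      exact h2 (e x) (by simpa using congrArg e hx)
  · intro σ _; ext x; simp
  · intro τ _; ext x; simp

theorem pmCount_eq_doubleFactorial :
    ∀ (m : ℕ) (α : Type) [DecidableEq α] [Fintype α], Fintype.card α = 2 * m →
      pmCount α = Nat.doubleFactorial (2 * m - 1) := by
  intro m
  induction m with
  | zero =>
    intro α _ _ hcard
    have : IsEmpty α := Fintype.card_eq_zero_iff.mp (by omega)
    have huniv : (Finset.univ.filter fun σ : Equiv.Perm α => IsPM σ) = Finset.univ := by
      refine Finset.filter_true_of_mem ?_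
      intro σ _
      exact ⟨fun x => isEmptyElim x, fun x => isEmptyElim x⟩
    unfold pmCount
    rw [huniv]
    simp [Finset.card_univ, Fintype.card_perm, hcard]
  | succ k ih =>
    intro α _ _ hcard
    have hpos : 0 < Fintype.card α := by omega
    obtain ⟨a⟩ := Fintype.card_pos_iff.mp hpos
    have hsplit : pmCount α = ∑ p ∈ Finset.univ.filter (fun p : α => p ≠ a),
        ((Finset.univ.filter fun σ : Equiv.Perm α => IsPM σ).filter fun σ => σ a = p).card := by
      unfold pmCount
      refine Finset.card_eq_sum_card_fiberwise ?_
      intro σ hσ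
      simp only [Finset.mem_coe, mem_filter, mem_univ, true_and] at hσ ⊢
      exact hσ.2 a
    rw [hsplit]
    have hterm : ∀ p ∈ Finset.univ.filter (fun p : α => p ≠ a),
        ((Finset.univ.filter fun σ : Equiv.Perm α => IsPM σ).filter fun σ => σ a = p).card
          = Nat.doubleFactorial (2 * k - 1) := by
      intro p hp
      simp only [mem_filter, mem_univ, true_and] at hp
      rw [fiber_card a p hp]
      have hcard2 : Fintype.card {x : α // x ≠ a ∧ x ≠ p} = 2 * k := by
        rw [Fintype.card_subtype]
        have : (Finset.univ.filter fun x : α => x ≠ a ∧ x ≠ p) = Finset.univ \ {a, p} := by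
          ext x
          simp [and_comm]
        rw [this, Finset.card_sdiff_of_subset (Finset.subset_univ _), Finset.card_univ, hcard,
          Finset.card_pair (Ne.symm hp)]
        omega
      -- transport to a small type
      have e : {x : α // x ≠ a ∧ x ≠ p} ≃ Fin (2 * k) :=
        Fintype.equivFinOfCardEq hcard2
      rw [pmCount_congr e]
      exact ih (Fin (2 * k)) (by simp)
    rw [Finset.sum_congr rfl hterm, Finset.sum_const, smul_eq_mul]
    have hfcard : (Finset.univ.filter fun p : α => p ≠ a).card = 2 * k + 1 := by
      rw [Finset.filter_ne', Finset.card_erase_of_mem (Finset.mem_univ a), Finset.card_univ, hcard]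
      omega
    rw [hfcard]
    have : 2 * (k + 1) - 1 = (2 * k - 1) + 2 ∨ k = 0 := by omega
    rcases this with h | h
    · rw [h, Nat.doubleFactorial_add_two]
      have h2 : 2 * k - 1 + 2 = 2 * k + 1 := by omega
      rw [h2]
    · subst h; simp [Nat.doubleFactorial]

theorem nh_card (n : ℕ) :
    ((Finset.univ.filter fun σ : Equiv.Perm (Fin n ⊕ Fin n) => IsPM σ).filter
      fun σ => ¬ ∃ x, (σ x).isLeft = x.isLeft).card = Nat.factorial n := by
  have : Nat.factorial n = (Finset.univ : Finset (Equiv.Perm (Fin n))).card := by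
    rw [Finset.card_univ, Fintype.card_perm, Fintype.card_fin]
  rw [this]
  symm
  refine Finset.card_bij (fun g _ => (Equiv.sumCongr g g⁻¹).trans (Equiv.sumComm _ _)) ?_ ?_ ?_
  · -- membership
    intro g _
    simp only [Finset.mem_filter, Finset.mem_univ, true_and]
    refine ⟨⟨?_, ?_⟩, ?_⟩
    · intro x; cases x <;> simp
    · intro x hx; cases x <;> simp at hx
    · rintro ⟨x, hx⟩; cases x <;> simp at hx
  · -- injective
    intro g _ g' _ h
    ext i
    have := congrArg (fun σ : Equiv.Perm (Fin n ⊕ Fin n) => σ (Sum.inl i)) h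
    have h2 : g i = g' i := by simpa using this
    rw [h2]
  · -- surjective
    intro σ hσ
    simp only [Finset.mem_filter, Finset.mem_univ, true_and, not_exists] at hσ
    obtain ⟨⟨hinv, hfpf⟩, hside⟩ := hσ
    have hswap : ∀ i : Fin n, ∃ j, σ (Sum.inl i) = Sum.inr j := by
      intro i
      have := hside (Sum.inl i)
      cases h : σ (Sum.inl i) with
      | inl j => rw [h] at this; simp at this
      | inr j => exact ⟨j, rfl⟩
    classical
    choose g hg using hswap
    have hginj : Function.Injective g := by
      intro i i' h
      have : σ (Sum.inl i) = σ (Sum.inl i') := by rw [hg, hg, h]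
      simpa using σ.injective this
    have hgbij : Function.Bijective g := Finite.injective_iff_bijective.mp hginj
    refine ⟨Equiv.ofBijective g hgbij, Finset.mem_univ _, ?_⟩
    ext x
    cases x with
    | inl i =>
      simp only [Equiv.trans_apply, Equiv.sumCongr_apply, Sum.map_inl, Equiv.sumComm_apply,
        Sum.swap_inl]
      rw [hg]
      rfl
    | inr j =>
      obtain ⟨i, rfl⟩ := hgbij.surjective j
      simp only [Equiv.trans_apply, Equiv.sumCongr_apply, Sum.map_inr, Equiv.sumComm_apply,
        Sum.swap_inr]
      have h1 : (Equiv.ofBijective g hgbij)⁻¹ (g i) = i := by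
        apply hginj
        exact Equiv.apply_symm_apply (Equiv.ofBijective g hgbij) (g i)
      rw [h1, ← hg i, hinv]

theorem even_bool_count (β : Type*) [Fintype β] [DecidableEq β] (hb : 1 ≤ Fintype.card β) :
    (Finset.univ.filter fun t : β → Bool =>
      Even (Finset.univ.filter fun x => t x = true).card).card = 2 ^ (Fintype.card β - 1) := by
  obtain ⟨b0⟩ := Fintype.card_pos_iff.mp hb
  obtain ⟨T, hT⟩ : ∃ T : (β → Bool) → (β → Bool),
      T = fun t => Function.update t b0 (!(t b0)) := ⟨_, rfl⟩
  have hTT : ∀ t, T (T t) = t := by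
    intro t
    simp only [hT, Function.update_self, Bool.not_not, Function.update_idem,
      Function.update_eq_self]
  have hflip : ∀ t : β → Bool, (Finset.univ.filter fun x => T t x = true)
      = if t b0 = true then (Finset.univ.filter fun x => t x = true).erase b0
        else insert b0 (Finset.univ.filter fun x => t x = true) := by
    intro t
    by_cases h : t b0 = true
    · rw [if_pos h]
      ext x
      by_cases hx : x = b0
      · subst hx; simp [hT, h]
      · simp [hT, Function.update_of_ne hx, hx]
    · rw [if_neg h]
      ext x
      by_cases hx : x = b0
      · subst hx; simp [hT, h]
      · simp [hT, Function.update_of_ne hx, hx]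
  have hparity : ∀ t : β → Bool,
      Even (Finset.univ.filter fun x => T t x = true).card ↔
      ¬ Even (Finset.univ.filter fun x => t x = true).card := by
    intro t
    rw [hflip]
    by_cases h : t b0 = true
    · rw [if_pos h]
      have hmem : b0 ∈ (Finset.univ.filter fun x => t x = true) := by simp [h]
      rw [Finset.card_erase_of_mem hmem]
      have hpos : 1 ≤ (Finset.univ.filter fun x => t x = true).card :=
        Finset.card_pos.mpr ⟨b0, hmem⟩
      rw [Nat.even_sub hpos]
      simp [(by decide : ¬ Even 1)]
    · rw [if_neg h]
      have hmem : b0 ∉ (Finset.univ.filter fun x => t x = true) := by simp [h]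
      rw [Finset.card_insert_of_notMem hmem]
      simp [Nat.even_add_one]
  have hEO : (Finset.univ.filter fun t : β → Bool =>
        Even (Finset.univ.filter fun x => t x = true).card).card
      = (Finset.univ.filter fun t : β → Bool =>
        ¬ Even (Finset.univ.filter fun x => t x = true).card).card := by
    refine Finset.card_nbij' T T ?_ ?_ ?_ ?_
    · intro t ht
      simp only [Finset.mem_coe, Finset.mem_filter, Finset.mem_univ, true_and] at ht ⊢
      rw [hparity]
      exact not_not_intro ht
    · intro t ht
      simp only [Finset.mem_coe, Finset.mem_filter, Finset.mem_univ, true_and] at ht ⊢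
      rw [hparity]
      exact ht
    · intro t _; exact hTT t
    · intro t _; exact hTT t
  have hsum : (Finset.univ.filter fun t : β → Bool =>
        Even (Finset.univ.filter fun x => t x = true).card).card
      + (Finset.univ.filter fun t : β → Bool =>
        ¬ Even (Finset.univ.filter fun x => t x = true).card).card
      = (Finset.univ : Finset (β → Bool)).card :=
    Finset.card_filter_add_card_filter_not _
  have hcu : (Finset.univ : Finset (β → Bool)).card = 2 ^ Fintype.card β := by
    rw [Finset.card_univ, Fintype.card_fun, Fintype.card_bool]
  have hpow : 2 ^ Fintype.card β = 2 ^ (Fintype.card β - 1) * 2 := by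
    have h1 : Fintype.card β - 1 + 1 = Fintype.card β := Nat.succ_pred_eq_of_pos hb
    conv_lhs => rw [← h1]
    rw [pow_succ]
  rw [← hEO, hcu, hpow, ← two_mul] at hsum
  rw [mul_comm] at hsum
  exact Nat.eq_of_mul_eq_mul_right (by norm_num) hsum

lemma card_filter_coe {α : Type*} [DecidableEq α] (S : Finset α) (p : α → Prop)
    [DecidablePred p] :
    (Finset.univ.filter fun x : {x // x ∈ S} => p ↑x).card = (S.filter p).card := by
  refine Finset.card_nbij (fun x => ↑x) ?_ ?_ ?_
  · intro x hx
    simp only [Finset.mem_coe, Finset.mem_filter, Finset.mem_univ, true_and] at hx ⊢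
    exact ⟨x.2, hx⟩
  · intro x _ y _ h; exact Subtype.ext h
  · intro x hx
    simp only [Finset.coe_filter, Set.mem_setOf_eq] at hx ⊢
    exact ⟨⟨x, hx.1⟩, by simp [hx.2], rfl⟩

theorem dec_card (n : ℕ) (hn : 1 ≤ n) (σ : Equiv.Perm (Fin n ⊕ Fin n)) (hσ : IsPM σ) :
    (Finset.univ.filter fun d : (Fin n ⊕ Fin n) → Bool =>
      (∀ x, d (σ x) = d x) ∧ 4 ∣ (Finset.univ.filter fun x => d x = true).card).card
      = 2 ^ (n - 1) := by
  obtain ⟨hinv, hfpf⟩ := hσ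
  set ι : (Fin n ⊕ Fin n) ≃ Fin (n + n) := finSumFinEquiv with hι
  set S : Finset (Fin n ⊕ Fin n) := Finset.univ.filter (fun x => ι x < ι (σ x)) with hS
  have hxor : ∀ x, σ x ∈ S ↔ x ∉ S := by
    intro x
    simp only [hS, Finset.mem_filter, Finset.mem_univ, true_and, not_lt]
    rw [hinv]
    constructor
    · intro h; exact le_of_lt h
    · intro h
      exact lt_of_le_of_ne h (fun hc => hfpf x (ι.injective hc.symm).symm)
  -- σ maps S bijectively onto univ \ S
  have hcompl : ∀ (p : (Fin n ⊕ Fin n) → Prop) [DecidablePred p], (∀ x, p (σ x) ↔ p x) →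
      (S.filter p).card = ((Finset.univ \ S).filter p).card := by
    intro p _ hp
    refine Finset.card_nbij σ ?_ ?_ ?_
    · intro x hx
      simp only [Finset.mem_coe, Finset.mem_filter] at hx ⊢
      refine ⟨Finset.mem_sdiff.mpr ⟨Finset.mem_univ _, ?_⟩, (hp x).mpr hx.2⟩
      intro hc
      exact ((hxor x).mp hc) hx.1
    · intro x _ y _ h; exact σ.injective h
    · intro y hy
      simp only [Finset.coe_filter, Set.mem_setOf_eq, Finset.mem_sdiff] at hy ⊢
      obtain ⟨⟨-, hyS⟩, hpy⟩ := hy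
      refine ⟨σ y, ⟨(hxor y).mpr hyS, ?_⟩, hinv y⟩
      rw [← hinv y] at hpy
      exact (hp (σ y)).mp hpy
  have hScard : S.card = n := by
    have h1 : (S.filter fun _ => True).card = ((Finset.univ \ S).filter fun _ => True).card :=
      hcompl (fun _ => True) (fun _ => Iff.rfl)
    simp at h1
    have h2 : (Finset.univ \ S).card = Finset.card (Finset.univ : Finset (Fin n ⊕ Fin n)) - S.card :=
      Finset.card_sdiff_of_subset (Finset.subset_univ _)
    have h3 : Finset.card (Finset.univ : Finset (Fin n ⊕ Fin n)) = n + n := by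
      simp [Fintype.card_sum]
    have h4 : S.card ≤ n + n := h3 ▸ Finset.card_le_card (Finset.subset_univ S)
    omega
  -- doubling of counts for block-constant functions
  have hdouble : ∀ d : (Fin n ⊕ Fin n) → Bool, (∀ x, d (σ x) = d x) →
      (Finset.univ.filter fun x => d x = true).card
        = 2 * (S.filter fun x => d x = true).card := by
    intro d hd
    have hu : S ∪ (Finset.univ \ S) = Finset.univ := by
      rw [Finset.union_sdiff_of_subset (Finset.subset_univ S)]
    have hdisj : Disjoint S (Finset.univ \ S) := Finset.disjoint_sdiff
    calc (Finset.univ.filter fun x => d x = true).card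
        = ((S ∪ (Finset.univ \ S)).filter fun x => d x = true).card := by rw [hu]
      _ = (S.filter fun x => d x = true).card
          + ((Finset.univ \ S).filter fun x => d x = true).card := by
          rw [Finset.filter_union]
          exact Finset.card_union_of_disjoint (Finset.disjoint_filter_filter hdisj)
      _ = 2 * (S.filter fun x => d x = true).card := by
          rw [← hcompl (fun x => d x = true)
            (fun x => by show d (σ x) = true ↔ d x = true; rw [hd x])]
          ring
  -- the bijection with even boolean functions on S
  have hEB := even_bool_count {x // x ∈ S} (by rw [Fintype.card_coe, hScard]; exact hn)
  rw [Fintype.card_coe, hScard] at hEB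
  rw [← hEB]
  clear hEB
  refine Finset.card_bij' (fun d _ => fun x : {x // x ∈ S} => d ↑x)
    (fun t _ => fun x => if hx : x ∈ S then t ⟨x, hx⟩ else t ⟨σ x, (hxor x).mpr hx⟩) ?_ ?_ ?_ ?_
  · intro d hd
    simp only [Finset.mem_filter, Finset.mem_univ, true_and] at hd ⊢
    obtain ⟨hbc, hdvd⟩ := hd
    rw [card_filter_coe S (fun x => d x = true)]
    rw [hdouble d hbc] at hdvd
    obtain ⟨k, hk⟩ := hdvd
    exact ⟨k, by omega⟩
  · intro t ht
    simp only [Finset.mem_filter, Finset.mem_univ, true_and] at ht ⊢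
    have hbc : ∀ x, (if hx : σ x ∈ S then t ⟨σ x, hx⟩ else t ⟨σ (σ x), (hxor (σ x)).mpr hx⟩)
        = if hx : x ∈ S then t ⟨x, hx⟩ else t ⟨σ x, (hxor x).mpr hx⟩ := by
      intro x
      by_cases hx : x ∈ S
      · have h1 : σ x ∉ S := fun hc => ((hxor x).mp hc) hx
        rw [dif_neg h1, dif_pos hx]
        congr 1
        exact Subtype.ext (hinv x)
      · have h1 : σ x ∈ S := (hxor x).mpr hx
        rw [dif_pos h1, dif_neg hx]
    refine ⟨hbc, ?_⟩
    rw [hdouble _ hbc]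
    have heq : (S.filter fun x =>
        (if hx : x ∈ S then t ⟨x, hx⟩ else t ⟨σ x, (hxor x).mpr hx⟩) = true)
        = S.filter (fun x => ∃ hx : x ∈ S, t ⟨x, hx⟩ = true) := by
      refine Finset.filter_congr ?_
      intro x hx
      rw [dif_pos hx]
      simp [hx]
    rw [heq]
    have heq2 : (S.filter (fun x => ∃ hx : x ∈ S, t ⟨x, hx⟩ = true)).card
        = (Finset.univ.filter fun x : {x // x ∈ S} => t x = true).card := by
      rw [← card_filter_coe S (fun x => ∃ hx : x ∈ S, t ⟨x, hx⟩ = true)]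
      congr 1
      refine Finset.filter_congr ?_
      intro x _
      simp [x.2]
    rw [heq2]
    obtain ⟨k, hk⟩ := ht
    exact ⟨k, by rw [hk]; ring⟩
  · intro d hd
    simp only [Finset.mem_filter, Finset.mem_univ, true_and] at hd
    funext x
    dsimp only
    by_cases hx : x ∈ S
    · rw [dif_pos hx]
    · rw [dif_neg hx]
      exact hd.1 x
  · intro t _
    funext x
    dsimp only
    rw [dif_pos x.2]

/-- counting pairs (involution, decoration) fiberwise -/
theorem prod_count (n : ℕ) (hn : 1 ≤ n) (P : Equiv.Perm (Fin n ⊕ Fin n) → Prop)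
    [DecidablePred P] (hP : ∀ σ, P σ → IsPM σ) :
    (Finset.univ.filter fun cd : Equiv.Perm (Fin n ⊕ Fin n) × ((Fin n ⊕ Fin n) → Bool) =>
        P cd.1 ∧ (∀ x, cd.2 (cd.1 x) = cd.2 x)
          ∧ 4 ∣ (Finset.univ.filter fun x => cd.2 x = true).card).card
      = (Finset.univ.filter P).card * 2 ^ (n - 1) := by
  rw [Finset.card_eq_sum_card_fiberwise (f := Prod.fst) (t := Finset.univ.filter P)
    (fun cd hcd => by
      simp only [Finset.mem_coe, Finset.mem_filter, Finset.mem_univ, true_and] at hcd ⊢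
      exact hcd.1)]
  rw [Finset.sum_congr rfl (fun σ hσ => ?_), Finset.sum_const, smul_eq_mul]
  simp only [Finset.mem_filter, Finset.mem_univ, true_and] at hσ
  rw [← dec_card n hn σ (hP σ hσ)]
  refine Finset.card_nbij' (fun cd => cd.2) (fun d => (σ, d)) ?_ ?_ ?_ ?_
  · intro cd hcd
    simp only [Finset.mem_coe, Finset.mem_filter, Finset.mem_univ, true_and] at hcd ⊢
    obtain ⟨⟨-, h2, h3⟩, h4⟩ := hcd
    rw [h4] at h2
    exact ⟨h2, h3⟩
  · intro d hd
    simp only [Finset.mem_coe, Finset.mem_filter, Finset.mem_univ, true_and] at hd ⊢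
    exact ⟨⟨hσ, hd.1, hd.2⟩, trivial⟩
  · intro cd hcd
    simp only [Finset.mem_coe, Finset.mem_filter] at hcd
    rw [← hcd.2]
  · intro d _
    rfl


def decEquiv (n : ℕ) : DecConnector n ≃
    {cd : Equiv.Perm (Fin n ⊕ Fin n) × ((Fin n ⊕ Fin n) → Bool) //
      IsPM cd.1 ∧ (∀ x, cd.2 (cd.1 x) = cd.2 x)
        ∧ 4 ∣ (Finset.univ.filter fun x => cd.2 x = true).card} where
  toFun c := ⟨(c.conn, c.dec), ⟨c.invol, c.fpf⟩, c.dec_block, c.even_blocks⟩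
  invFun p := ⟨p.1.1, p.2.1.1, p.2.1.2, p.1.2, p.2.2.1, p.2.2.2⟩
  left_inv c := rfl
  right_inv p := rfl

instance (n : ℕ) : Finite (DecConnector n) := Finite.of_equiv _ (decEquiv n).symm

lemma nat_card_subtype {α : Type*} [Fintype α] (p : α → Prop) [DecidablePred p] :
    Nat.card {x // p x} = (Finset.univ.filter p).card := by
  rw [Nat.card_eq_fintype_card, Fintype.card_subtype]

lemma pm_card_sum (n : ℕ) :
    (Finset.univ.filter fun σ : Equiv.Perm (Fin n ⊕ Fin n) => IsPM σ).card
      = Nat.doubleFactorial (2 * n - 1) := by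
  have : pmCount (Fin n ⊕ Fin n) = Nat.doubleFactorial (2 * n - 1) :=
    pmCount_eq_doubleFactorial n _ (by simp [Fintype.card_sum]; omega)
  exact this

/-- For every `n ≥ 1` the cardinality of the disjoint union
`T_n ⊔ T_n^= ⊔ (T_n^0 ∩ T_n^=)` equals
`d(n) = (2^n + 1)·(2n−1)!! − (2^(n-1) + 1)·n!`.  Here `T_n^=` consists of the
decorated `n`-connectors with at least one horizontal block (a block `{x, conn x}`
with both points on the same side) and `T_n^0` of those with no decorated blocks. -/
theorem card_brauerDiagramBasis (n : ℕ) (hn : 1 ≤ n) :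
    Nat.card (DecConnector n ⊕
        {c : DecConnector n // ∃ x, (c.conn x).isLeft = x.isLeft} ⊕
        {c : DecConnector n //
          (∀ x, c.dec x = false) ∧ ∃ x, (c.conn x).isLeft = x.isLeft}) =
      (2 ^ n + 1) * Nat.doubleFactorial (2 * n - 1) -
        (2 ^ (n - 1) + 1) * Nat.factorial n := by
  classical
  set D := Nat.doubleFactorial (2 * n - 1) with hD
  set X := ((Finset.univ.filter fun σ : Equiv.Perm (Fin n ⊕ Fin n) => IsPM σ).filter
      fun σ => ∃ x, (σ x).isLeft = x.isLeft).card with hX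
  -- card of T_n
  have cardA : Nat.card (DecConnector n) = D * 2 ^ (n - 1) := by
    rw [Nat.card_congr (decEquiv n), nat_card_subtype,
      prod_count n hn IsPM (fun _ h => h), pm_card_sum n]
  -- card of T_n^=
  have cardB : Nat.card {c : DecConnector n // ∃ x, (c.conn x).isLeft = x.isLeft}
      = X * 2 ^ (n - 1) := by
    have e : {c : DecConnector n // ∃ x, (c.conn x).isLeft = x.isLeft} ≃
        {cd : Equiv.Perm (Fin n ⊕ Fin n) × ((Fin n ⊕ Fin n) → Bool) //
          (IsPM cd.1 ∧ (∀ x, cd.2 (cd.1 x) = cd.2 x)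
            ∧ 4 ∣ (Finset.univ.filter fun x => cd.2 x = true).card)
          ∧ ∃ x, (cd.1 x).isLeft = x.isLeft} :=
      ((decEquiv n).subtypeEquiv (fun c => Iff.rfl)).trans
        (Equiv.subtypeSubtypeEquivSubtypeInter _
          (fun cd : Equiv.Perm (Fin n ⊕ Fin n) × ((Fin n ⊕ Fin n) → Bool) =>
            ∃ x, (cd.1 x).isLeft = x.isLeft))
    rw [Nat.card_congr e, nat_card_subtype]
    have hfc : (Finset.univ.filter fun cd :
          Equiv.Perm (Fin n ⊕ Fin n) × ((Fin n ⊕ Fin n) → Bool) =>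
        (IsPM cd.1 ∧ (∀ x, cd.2 (cd.1 x) = cd.2 x)
          ∧ 4 ∣ (Finset.univ.filter fun x => cd.2 x = true).card)
          ∧ ∃ x, (cd.1 x).isLeft = x.isLeft)
        = Finset.univ.filter fun cd =>
        (IsPM cd.1 ∧ ∃ x, (cd.1 x).isLeft = x.isLeft) ∧ (∀ x, cd.2 (cd.1 x) = cd.2 x)
          ∧ 4 ∣ (Finset.univ.filter fun x => cd.2 x = true).card := by
      apply Finset.filter_congr
      intro cd _
      tauto
    rw [hfc, prod_count n hn (fun σ => IsPM σ ∧ ∃ x, (σ x).isLeft = x.isLeft)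
      (fun _ h => h.1)]
    congr 1
    rw [hX, Finset.filter_filter]
  -- card of T_n^0 ∩ T_n^=
  have cardC : Nat.card {c : DecConnector n //
      (∀ x, c.dec x = false) ∧ ∃ x, (c.conn x).isLeft = x.isLeft} = X := by
    have e : {c : DecConnector n //
          (∀ x, c.dec x = false) ∧ ∃ x, (c.conn x).isLeft = x.isLeft} ≃
        {cd : Equiv.Perm (Fin n ⊕ Fin n) × ((Fin n ⊕ Fin n) → Bool) //
          (IsPM cd.1 ∧ (∀ x, cd.2 (cd.1 x) = cd.2 x)
            ∧ 4 ∣ (Finset.univ.filter fun x => cd.2 x = true).card)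
          ∧ (∀ x, cd.2 x = false) ∧ ∃ x, (cd.1 x).isLeft = x.isLeft} :=
      ((decEquiv n).subtypeEquiv (fun c => Iff.rfl)).trans
        (Equiv.subtypeSubtypeEquivSubtypeInter _
          (fun cd : Equiv.Perm (Fin n ⊕ Fin n) × ((Fin n ⊕ Fin n) → Bool) =>
            (∀ x, cd.2 x = false) ∧ ∃ x, (cd.1 x).isLeft = x.isLeft))
    rw [Nat.card_congr e, nat_card_subtype, hX]
    refine Finset.card_nbij' (fun cd => cd.1) (fun σ => (σ, fun _ => false)) ?_ ?_ ?_ ?_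
    · intro cd hcd
      simp only [Finset.mem_coe, Finset.mem_filter, Finset.mem_univ, true_and] at hcd ⊢
      exact ⟨hcd.1.1, hcd.2.2⟩
    · intro σ hσ
      simp only [Finset.mem_coe, Finset.mem_filter, Finset.mem_univ, true_and] at hσ ⊢
      refine ⟨⟨hσ.1, ?_, ?_⟩, ?_, hσ.2⟩ <;> simp
    · intro cd hcd
      simp only [Finset.mem_coe, Finset.mem_filter, Finset.mem_univ, true_and] at hcd
      ext
      · rfl
      · rename_i x
        exact (hcd.2.1 x).symm
    · intro σ _
      rfl
  -- splitting : X + n! = D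
  have hsplit : X + Nat.factorial n = D := by
    have h1 : X + ((Finset.univ.filter fun σ : Equiv.Perm (Fin n ⊕ Fin n) => IsPM σ).filter
        fun σ => ¬ ∃ x, (σ x).isLeft = x.isLeft).card
        = (Finset.univ.filter fun σ : Equiv.Perm (Fin n ⊕ Fin n) => IsPM σ).card := by
      rw [hX]
      exact Finset.card_filter_add_card_filter_not _
    rw [nh_card n, pm_card_sum n] at h1
    exact h1
  rw [Nat.card_sum, Nat.card_sum, cardA, cardB, cardC]
  symm
  apply Nat.sub_eq_of_eq_add
  have h2 : 2 ^ n = 2 ^ (n - 1) * 2 := by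
    have h1 : n - 1 + 1 = n := by omega
    conv_lhs => rw [← h1]
    rw [pow_succ]
  rw [← hsplit, h2]
  ring
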